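/- For every integer k ≥ 2 there exists a constant c = c(k) > 0 such that for all positive integers N and a, the sum S(k,N,a) = Σ (n₁·n₂·…·n_k)^{-5/2}, taken over all k-tuples of positive integers (n₁,…,n_k) with n₁+…+n_k = N and n₁ > a and n₂ > a, satisfies S(k,N,a) ≤ c · N^{-5/2} · a^{-3/2}. -/

import Mathlib

open Finset

private lemma sq_tail_aux (a : ℕ) (ha : 0 < a) (M : ℕ) (hM : a ≤ M) :
    ∑ n ∈ Finset.range (M + 1), (if a < n then ((n : ℝ) ^ 2)⁻¹ else 0)
      ≤ (a : ℝ)⁻¹ - (M : ℝ)⁻¹ := by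
  induction M, hM using Nat.le_induction with
  | base =>
      rw [Finset.sum_eq_zero, sub_self]
      intro n hn
      rw [Finset.mem_range] at hn
      rw [if_neg]; omega
  | succ M hM ih =>
      rw [Finset.sum_range_succ, if_pos (by omega)]
      have hM0 : (0 : ℝ) < M := by exact_mod_cast lt_of_lt_of_le ha hM
      have hM1 : (0 : ℝ) < (M : ℝ) + 1 := by linarith
      have e0 : ((M + 1 : ℕ) : ℝ) = (M : ℝ) + 1 := by push_cast; ring
      have e1 : (M : ℝ)⁻¹ - ((M : ℝ) + 1)⁻¹ = ((M : ℝ) * ((M : ℝ) + 1))⁻¹ := by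
        field_simp
        ring
      have e2 : ((((M : ℝ) + 1)) ^ 2)⁻¹ ≤ ((M : ℝ) * ((M : ℝ) + 1))⁻¹ := by
        apply inv_anti₀ (by positivity)
        nlinarith
      rw [e0]
      linarith

private lemma sq_tail (a M : ℕ) (ha : 0 < a) :
    ∑ n ∈ Finset.range M, (if a < n then ((n : ℝ) ^ 2)⁻¹ else 0) ≤ (a : ℝ)⁻¹ := by
  rcases le_or_gt M (a + 1) with h | h
  · rw [Finset.sum_eq_zero]
    · positivity
    · intro n hn
      rw [Finset.mem_range] at hn
      rw [if_neg]; omega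
  · obtain ⟨M', rfl⟩ : ∃ M', M = M' + 1 := ⟨M - 1, by omega⟩
    have h1 := sq_tail_aux a ha M' (by omega)
    have h2 : (0 : ℝ) ≤ (M' : ℝ)⁻¹ := by positivity
    linarith

private lemma rpow_tail (a M : ℕ) (ha : 0 < a) :
    ∑ n ∈ Finset.range M, (if a < n then (n : ℝ) ^ (-(5 / 2) : ℝ) else 0)
      ≤ (a : ℝ) ^ (-(3 / 2) : ℝ) := by
  have ha' : (0 : ℝ) < a := by exact_mod_cast ha
  have key : ∀ n ∈ Finset.range M, (if a < n then (n : ℝ) ^ (-(5 / 2) : ℝ) else 0)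
      ≤ (a : ℝ) ^ (-(1 / 2) : ℝ) * (if a < n then ((n : ℝ) ^ 2)⁻¹ else 0) := by
    intro n _
    by_cases h : a < n
    · rw [if_pos h, if_pos h]
      have hn : (0 : ℝ) < n := by
        have : 0 < n := by omega
        exact_mod_cast this
      have han : (a : ℝ) ≤ n := by exact_mod_cast h.le
      have e1 : (n : ℝ) ^ (-(5 / 2) : ℝ) = (n : ℝ) ^ (-(1 / 2) : ℝ) * (n : ℝ) ^ (-(2 : ℝ)) := by
        rw [← Real.rpow_add hn]; norm_num
      have e2 : (n : ℝ) ^ (-(2 : ℝ)) = ((n : ℝ) ^ 2)⁻¹ := by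
        rw [show (-(2 : ℝ)) = -((2 : ℕ) : ℝ) by norm_num, Real.rpow_neg hn.le,
          Real.rpow_natCast]
      rw [e1, e2]
      have h3 : (n : ℝ) ^ (-(1 / 2) : ℝ) ≤ (a : ℝ) ^ (-(1 / 2) : ℝ) :=
        Real.rpow_le_rpow_of_nonpos ha' han (by norm_num)
      have h4 : (0 : ℝ) ≤ ((n : ℝ) ^ 2)⁻¹ := by positivity
      exact mul_le_mul_of_nonneg_right h3 h4
    · rw [if_neg h, if_neg h, mul_zero]
  calc ∑ n ∈ Finset.range M, (if a < n then (n : ℝ) ^ (-(5 / 2) : ℝ) else 0)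
      ≤ ∑ n ∈ Finset.range M,
          (a : ℝ) ^ (-(1 / 2) : ℝ) * (if a < n then ((n : ℝ) ^ 2)⁻¹ else 0) :=
        Finset.sum_le_sum key
    _ = (a : ℝ) ^ (-(1 / 2) : ℝ) *
          ∑ n ∈ Finset.range M, (if a < n then ((n : ℝ) ^ 2)⁻¹ else 0) := by
        rw [Finset.mul_sum]
    _ ≤ (a : ℝ) ^ (-(1 / 2) : ℝ) * (a : ℝ)⁻¹ := by
        apply mul_le_mul_of_nonneg_left (sq_tail a M ha) (by positivity)
    _ = (a : ℝ) ^ (-(3 / 2) : ℝ) := by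
        rw [← Real.rpow_neg_one (a : ℝ), ← Real.rpow_add ha']
        norm_num

private lemma rpow_all (M : ℕ) :
    ∑ n ∈ Finset.range M, (if 0 < n then (n : ℝ) ^ (-(5 / 2) : ℝ) else 0) ≤ 2 := by
  have key : ∀ n ∈ Finset.range M, (if 0 < n then (n : ℝ) ^ (-(5 / 2) : ℝ) else 0)
      ≤ (if n = 1 then (1 : ℝ) else 0) + (if 1 < n then ((n : ℝ) ^ 2)⁻¹ else 0) := by
    intro n _
    rcases Nat.lt_or_ge n 1 with h | h
    · have : n = 0 := by omega
      subst this; norm_num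
    rcases Nat.eq_or_lt_of_le h with h1 | h1
    · subst h1
      norm_num [Real.one_rpow]
    · have hn1 : (1 : ℝ) ≤ n := by exact_mod_cast h
      rw [if_pos (by omega), if_neg (by omega), if_pos h1, zero_add]
      have e2 : (n : ℝ) ^ (-(2 : ℝ)) = ((n : ℝ) ^ 2)⁻¹ := by
        rw [show (-(2 : ℝ)) = -((2 : ℕ) : ℝ) by norm_num,
          Real.rpow_neg (by positivity), Real.rpow_natCast]
      rw [← e2]
      exact Real.rpow_le_rpow_of_exponent_le hn1 (by norm_num)
  calc ∑ n ∈ Finset.range M, (if 0 < n then (n : ℝ) ^ (-(5 / 2) : ℝ) else 0)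
      ≤ ∑ n ∈ Finset.range M, ((if n = 1 then (1 : ℝ) else 0)
          + (if 1 < n then ((n : ℝ) ^ 2)⁻¹ else 0)) := Finset.sum_le_sum key
    _ = (∑ n ∈ Finset.range M, (if n = 1 then (1 : ℝ) else 0))
          + ∑ n ∈ Finset.range M, (if 1 < n then ((n : ℝ) ^ 2)⁻¹ else 0) :=
        Finset.sum_add_distrib
    _ ≤ 1 + 1 := by
        gcongr
        · rw [Finset.sum_ite_eq' (Finset.range M) 1 (fun _ => (1:ℝ))]
          split_ifs <;> norm_num
        · simpa using sq_tail 1 M one_pos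
    _ = 2 := by norm_num

private noncomputable def gfun (a : ℕ) {k : ℕ} (i j₀ : Fin k) (j : Fin k) (n : ℕ) : ℝ :=
  if j = i then (if n = 0 then 1 else 0)
  else if j = j₀ then (if a < n then (n : ℝ) ^ (-(5 / 2) : ℝ) else 0)
  else if 0 < n then (n : ℝ) ^ (-(5 / 2) : ℝ) else 0

private lemma gfun_nonneg (a : ℕ) {k : ℕ} (i j₀ j : Fin k) (n : ℕ) :
    0 ≤ gfun a i j₀ j n := by
  unfold gfun; split_ifs <;> positivity

private lemma per_index (k N a : ℕ) (hk : 2 ≤ k) (hN : 0 < N) (ha : 0 < a)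
    (i j₀ : Fin k) (hij : j₀ ≠ i) :
    ∑ f ∈ (Fintype.piFinset (fun _ : Fin k => Finset.range (N + 1))).filter
        (fun f => (∀ j, 0 < f j) ∧ (∑ j, f j = N) ∧ a < f j₀),
      (if N ≤ k * f i then ∏ j, ((f j : ℝ)) ^ (-(5 / 2) : ℝ) else 0)
    ≤ (k : ℝ) ^ ((5 : ℝ) / 2) * 2 ^ k
        * ((N : ℝ) ^ (-(5 / 2) : ℝ) * (a : ℝ) ^ (-(3 / 2) : ℝ)) := by
  have hk0 : (0 : ℝ) < k := by exact_mod_cast lt_of_lt_of_le two_pos hk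
  have hN0 : (0 : ℝ) < N := by exact_mod_cast hN
  have ha0 : (0 : ℝ) < a := by exact_mod_cast ha
  set S := (Fintype.piFinset (fun _ : Fin k => Finset.range (N + 1))).filter
      (fun f => (∀ j, 0 < f j) ∧ (∑ j, f j = N) ∧ a < f j₀) with hS
  set K : ℝ := (k : ℝ) ^ ((5 : ℝ) / 2) * (N : ℝ) ^ (-(5 / 2) : ℝ) with hK
  have hK0 : 0 ≤ K := by positivity
  -- Step A : termwise bound
  have stepA : ∀ f ∈ S, (if N ≤ k * f i then ∏ j, ((f j : ℝ)) ^ (-(5 / 2) : ℝ) else 0)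
      ≤ K * ∏ j, gfun a i j₀ j (Function.update f i 0 j) := by
    intro f hf
    rw [hS, Finset.mem_filter] at hf
    obtain ⟨hpi, hpos, hsum, haj⟩ := hf
    have hprod0 : 0 ≤ ∏ j, gfun a i j₀ j (Function.update f i 0 j) :=
      Finset.prod_nonneg fun j _ => gfun_nonneg a i j₀ j _
    by_cases hNi : N ≤ k * f i
    · rw [if_pos hNi]
      have hfl : ∏ j, ((f j : ℝ)) ^ (-(5 / 2) : ℝ)
          = ((f i : ℝ)) ^ (-(5 / 2) : ℝ)
            * ∏ j ∈ Finset.univ.erase i, ((f j : ℝ)) ^ (-(5 / 2) : ℝ) :=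
        (Finset.mul_prod_erase Finset.univ _ (Finset.mem_univ i)).symm
      have hfr : ∏ j, gfun a i j₀ j (Function.update f i 0 j)
          = gfun a i j₀ i (Function.update f i 0 i)
            * ∏ j ∈ Finset.univ.erase i, gfun a i j₀ j (Function.update f i 0 j) :=
        (Finset.mul_prod_erase Finset.univ _ (Finset.mem_univ i)).symm
      have h1 : gfun a i j₀ i (Function.update f i 0 i) = 1 := by
        rw [Function.update_self]
        simp [gfun]
      have h2 : ∏ j ∈ Finset.univ.erase i, gfun a i j₀ j (Function.update f i 0 j)
          = ∏ j ∈ Finset.univ.erase i, ((f j : ℝ)) ^ (-(5 / 2) : ℝ) := by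
        apply Finset.prod_congr rfl
        intro j hj
        have hji : j ≠ i := (Finset.mem_erase.mp hj).1
        rw [Function.update_of_ne hji]
        by_cases hjj : j = j₀
        · subst hjj
          simp [gfun, if_neg hji, haj]
        · simp only [gfun, if_neg hji, if_neg hjj, if_pos (hpos j)]
      have hfik : ((f i : ℝ)) ^ (-(5 / 2) : ℝ) ≤ K := by
        have hfipos : (0 : ℝ) < f i := by
          exact_mod_cast hpos i
        have hfi : (N : ℝ) / k ≤ f i := by
          rw [div_le_iff₀ hk0]
          calc (N : ℝ) ≤ (k * f i : ℕ) := by exact_mod_cast hNi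
            _ = (f i : ℝ) * k := by push_cast; ring
        have hb1 : ((f i : ℝ)) ^ (-(5 / 2) : ℝ) ≤ ((N : ℝ) / k) ^ (-(5 / 2) : ℝ) :=
          Real.rpow_le_rpow_of_nonpos (by positivity) hfi (by norm_num)
        have hb2 : ((N : ℝ) / k) ^ (-(5 / 2) : ℝ) = K := by
          rw [hK, show (-(5 / 2) : ℝ) = -((5 : ℝ) / 2) by norm_num,
            Real.rpow_neg (by positivity), Real.div_rpow hN0.le hk0.le, inv_div,
            div_eq_mul_inv, ← Real.rpow_neg hN0.le]
        exact hb2 ▸ hb1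
      rw [hfl, hfr, h1, h2, one_mul]
      have hP0 : 0 ≤ ∏ j ∈ Finset.univ.erase i, ((f j : ℝ)) ^ (-(5 / 2) : ℝ) :=
        Finset.prod_nonneg fun j _ => Real.rpow_nonneg (Nat.cast_nonneg _) _
      exact mul_le_mul_of_nonneg_right hfik hP0
    · rw [if_neg hNi]
      positivity
  -- Step B : sum over updated tuples
  have hinj : ∀ f ∈ S, ∀ g ∈ S, Function.update f i 0 = Function.update g i 0 → f = g := by
    intro f hf g hg hfg
    rw [hS, Finset.mem_filter] at hf hg
    obtain ⟨-, -, hsumf, -⟩ := hf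
    obtain ⟨-, -, hsumg, -⟩ := hg
    have hcoord : ∀ j, j ≠ i → f j = g j := by
      intro j hj
      have := congrFun hfg j
      rwa [Function.update_of_ne hj, Function.update_of_ne hj] at this
    have hrest : ∑ j ∈ Finset.univ.erase i, f j = ∑ j ∈ Finset.univ.erase i, g j :=
      Finset.sum_congr rfl fun j hj => hcoord j (Finset.mem_erase.mp hj).1
    have hf' : f i + ∑ j ∈ Finset.univ.erase i, f j = N := by
      rw [Finset.add_sum_erase Finset.univ f (Finset.mem_univ i), hsumf]
    have hg' : g i + ∑ j ∈ Finset.univ.erase i, g j = N := by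
      rw [Finset.add_sum_erase Finset.univ g (Finset.mem_univ i), hsumg]
    have hii : f i = g i := by omega
    funext j
    by_cases hj : j = i
    · rw [hj]; exact hii
    · exact hcoord j hj
  have stepB : ∑ f ∈ S, ∏ j, gfun a i j₀ j (Function.update f i 0 j)
      ≤ ∑ g ∈ Fintype.piFinset (fun _ : Fin k => Finset.range (N + 1)),
          ∏ j, gfun a i j₀ j (g j) := by
    have himg := Finset.sum_image (g := fun f : Fin k → ℕ => Function.update f i 0)
      (f := fun y : Fin k → ℕ => ∏ j, gfun a i j₀ j (y j)) hinj
    refine le_trans (le_of_eq himg.symm) ?_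
    apply Finset.sum_le_sum_of_subset_of_nonneg
    · intro g hg
      rw [Finset.mem_image] at hg
      obtain ⟨f, hf, rfl⟩ := hg
      rw [hS, Finset.mem_filter] at hf
      rw [Fintype.mem_piFinset]
      intro j
      by_cases hj : j = i
      · rw [hj, Function.update_self]
        simp
      · rw [Function.update_of_ne hj]
        exact Fintype.mem_piFinset.mp hf.1 j
    · intro g _ _
      exact Finset.prod_nonneg fun j _ => gfun_nonneg a i j₀ j _
  -- Step C+D : factorize and bound
  have stepC : ∑ g ∈ Fintype.piFinset (fun _ : Fin k => Finset.range (N + 1)),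
      ∏ j, gfun a i j₀ j (g j)
      = ∏ j, ∑ n ∈ Finset.range (N + 1), gfun a i j₀ j n :=
    (Finset.prod_univ_sum _ _).symm
  have stepD : ∏ j, ∑ n ∈ Finset.range (N + 1), gfun a i j₀ j n
      ≤ ∏ j : Fin k, (if j = j₀ then (a : ℝ) ^ (-(3 / 2) : ℝ) else 2) := by
    apply Finset.prod_le_prod
    · intro j _
      exact Finset.sum_nonneg fun n _ => gfun_nonneg a i j₀ j n
    · intro j _
      by_cases hji : j = i
      · subst hji
        rw [if_neg (fun h => hij h.symm)]
        have hgg : ∀ n, gfun a j j₀ j n = if n = 0 then (1 : ℝ) else 0 := by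
          intro n; simp [gfun]
        rw [Finset.sum_congr rfl fun n _ => hgg n,
          Finset.sum_ite_eq' (Finset.range (N + 1)) 0 (fun _ => (1 : ℝ)),
          if_pos (Finset.mem_range.mpr (by omega))]
        norm_num
      · by_cases hjj : j = j₀
        · subst hjj
          rw [if_pos rfl]
          simp only [gfun, if_neg hji, if_pos rfl]
          exact rpow_tail a (N + 1) ha
        · rw [if_neg hjj]
          simp only [gfun, if_neg hji, if_neg hjj]
          exact rpow_all (N + 1)
  have stepE : ∏ j : Fin k, (if j = j₀ then (a : ℝ) ^ (-(3 / 2) : ℝ) else 2)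
      = (a : ℝ) ^ (-(3 / 2) : ℝ) * 2 ^ (k - 1) := by
    rw [← Finset.mul_prod_erase Finset.univ _ (Finset.mem_univ j₀), if_pos rfl]
    congr 1
    rw [Finset.prod_congr rfl (fun j hj => if_neg (Finset.mem_erase.mp hj).1),
      Finset.prod_const, Finset.card_erase_of_mem (Finset.mem_univ j₀),
      Finset.card_univ, Fintype.card_fin]
  calc ∑ f ∈ S, (if N ≤ k * f i then ∏ j, ((f j : ℝ)) ^ (-(5 / 2) : ℝ) else 0)
      ≤ ∑ f ∈ S, K * ∏ j, gfun a i j₀ j (Function.update f i 0 j) :=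
        Finset.sum_le_sum stepA
    _ = K * ∑ f ∈ S, ∏ j, gfun a i j₀ j (Function.update f i 0 j) := by
        rw [Finset.mul_sum]
    _ ≤ K * ((a : ℝ) ^ (-(3 / 2) : ℝ) * 2 ^ (k - 1)) := by
        apply mul_le_mul_of_nonneg_left _ hK0
        calc ∑ f ∈ S, ∏ j, gfun a i j₀ j (Function.update f i 0 j)
            ≤ ∑ g ∈ Fintype.piFinset (fun _ : Fin k => Finset.range (N + 1)),
                ∏ j, gfun a i j₀ j (g j) := stepB
          _ = ∏ j, ∑ n ∈ Finset.range (N + 1), gfun a i j₀ j n := stepC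
          _ ≤ ∏ j : Fin k, (if j = j₀ then (a : ℝ) ^ (-(3 / 2) : ℝ) else 2) := stepD
          _ = (a : ℝ) ^ (-(3 / 2) : ℝ) * 2 ^ (k - 1) := stepE
    _ ≤ (k : ℝ) ^ ((5 : ℝ) / 2) * 2 ^ k
          * ((N : ℝ) ^ (-(5 / 2) : ℝ) * (a : ℝ) ^ (-(3 / 2) : ℝ)) := by
        rw [hK]
        have h2k : (2 : ℝ) ^ (k - 1) ≤ 2 ^ k :=
          pow_le_pow_right₀ (by norm_num) (Nat.sub_le k 1)
        have hx : (0 : ℝ) ≤ (k : ℝ) ^ ((5 : ℝ) / 2) * (N : ℝ) ^ (-(5 / 2) : ℝ)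
            * (a : ℝ) ^ (-(3 / 2) : ℝ) := by positivity
        calc (k : ℝ) ^ ((5 : ℝ) / 2) * (N : ℝ) ^ (-(5 / 2) : ℝ)
              * ((a : ℝ) ^ (-(3 / 2) : ℝ) * 2 ^ (k - 1))
            = ((k : ℝ) ^ ((5 : ℝ) / 2) * (N : ℝ) ^ (-(5 / 2) : ℝ)
                * (a : ℝ) ^ (-(3 / 2) : ℝ)) * 2 ^ (k - 1) := by ring
          _ ≤ ((k : ℝ) ^ ((5 : ℝ) / 2) * (N : ℝ) ^ (-(5 / 2) : ℝ)
                * (a : ℝ) ^ (-(3 / 2) : ℝ)) * 2 ^ k :=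
              mul_le_mul_of_nonneg_left h2k hx
          _ = (k : ℝ) ^ ((5 : ℝ) / 2) * 2 ^ k
                * ((N : ℝ) ^ (-(5 / 2) : ℝ) * (a : ℝ) ^ (-(3 / 2) : ℝ)) := by ring


/-- For every integer k ≥ 2 there exists c = c(k) > 0 such that for all
positive integers N and a, the sum S(k,N,a) = Σ (n₁⋯n_k)^{-5/2} over ordered k-tuples of
positive integers summing to N with n₁ > a and n₂ > a satisfies
S(k,N,a) ≤ c · N^{-5/2} · a^{-3/2}. -/
theorem small_sum_estimate (k : ℕ) (hk : 2 ≤ k) :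
    ∃ c : ℝ, 0 < c ∧ ∀ N a : ℕ, 0 < N → 0 < a →
      ∑ f ∈ (Fintype.piFinset (fun _ : Fin k => Finset.range (N + 1))).filter
          (fun f => (∀ i, 0 < f i) ∧ (∑ i, f i = N) ∧
            a < f ⟨0, by omega⟩ ∧ a < f ⟨1, by omega⟩),
        (∏ i, (f i : ℝ)) ^ (-(5 / 2) : ℝ)
        ≤ c * (N : ℝ) ^ (-(5 / 2) : ℝ) * (a : ℝ) ^ (-(3 / 2) : ℝ) := by
  have hk0 : 0 < k := by omega
  have hk0' : (0 : ℝ) < k := by exact_mod_cast hk0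
  refine ⟨(k : ℝ) * ((k : ℝ) ^ ((5 : ℝ) / 2) * 2 ^ k), by positivity, ?_⟩
  intro N a hN ha
  set S := (Fintype.piFinset (fun _ : Fin k => Finset.range (N + 1))).filter
      (fun f => (∀ i, 0 < f i) ∧ (∑ i, f i = N) ∧
        a < f ⟨0, by omega⟩ ∧ a < f ⟨1, by omega⟩) with hS
  have hchoice : ∀ i : Fin k, ∃ j₀ : Fin k, j₀ ≠ i ∧
      (j₀ = (⟨0, by omega⟩ : Fin k) ∨ j₀ = (⟨1, by omega⟩ : Fin k)) := by
    intro i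
    by_cases h : i = (⟨0, by omega⟩ : Fin k)
    · refine ⟨⟨1, by omega⟩, ?_, Or.inr rfl⟩
      rw [h]
      simp [Fin.ext_iff]
    · exact ⟨⟨0, by omega⟩, fun e => h e.symm, Or.inl rfl⟩
  calc ∑ f ∈ S, (∏ i, ((f i : ℝ))) ^ (-(5 / 2) : ℝ)
      = ∑ f ∈ S, ∏ i, ((f i : ℝ)) ^ (-(5 / 2) : ℝ) :=
        Finset.sum_congr rfl fun f _ =>
          (Real.finset_prod_rpow Finset.univ _ (fun j _ => Nat.cast_nonneg _) _).symm
    _ ≤ ∑ f ∈ S, ∑ i : Fin k,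
          (if N ≤ k * f i then ∏ j, ((f j : ℝ)) ^ (-(5 / 2) : ℝ) else 0) := by
        apply Finset.sum_le_sum
        intro f hf
        rw [hS, Finset.mem_filter] at hf
        obtain ⟨-, hpos, hsum, -⟩ := hf
        have hex : ∃ i, N ≤ k * f i := by
          by_contra hc
          push_neg at hc
          have h1 : k * N = ∑ j : Fin k, k * f j := by rw [← Finset.mul_sum, hsum]
          have h2 : ∑ j : Fin k, k * f j ≤ ∑ _j : Fin k, (N - 1) :=
            Finset.sum_le_sum fun j _ => by have := hc j; omega
          rw [Finset.sum_const, Finset.card_univ, Fintype.card_fin, smul_eq_mul] at h2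
          have h3 : k * N ≤ k * (N - 1) := by omega
          have h4 : N ≤ N - 1 := Nat.le_of_mul_le_mul_left h3 hk0
          omega
        obtain ⟨i₀, hi₀⟩ := hex
        have hnn : ∀ i : Fin k, i ∈ Finset.univ → (0 : ℝ) ≤
            (if N ≤ k * f i then ∏ j, ((f j : ℝ)) ^ (-(5 / 2) : ℝ) else 0) := by
          intro i _
          split_ifs
          · exact Finset.prod_nonneg fun j _ => Real.rpow_nonneg (Nat.cast_nonneg _) _
          · exact le_refl _
        calc ∏ j, ((f j : ℝ)) ^ (-(5 / 2) : ℝ)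
            = (if N ≤ k * f i₀ then ∏ j, ((f j : ℝ)) ^ (-(5 / 2) : ℝ) else 0) :=
              (if_pos hi₀).symm
          _ ≤ ∑ i : Fin k,
                (if N ≤ k * f i then ∏ j, ((f j : ℝ)) ^ (-(5 / 2) : ℝ) else 0) :=
              Finset.single_le_sum hnn (Finset.mem_univ i₀)
    _ = ∑ i : Fin k, ∑ f ∈ S,
          (if N ≤ k * f i then ∏ j, ((f j : ℝ)) ^ (-(5 / 2) : ℝ) else 0) :=
        Finset.sum_comm
    _ ≤ ∑ _i : Fin k, (k : ℝ) ^ ((5 : ℝ) / 2) * 2 ^ k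
          * ((N : ℝ) ^ (-(5 / 2) : ℝ) * (a : ℝ) ^ (-(3 / 2) : ℝ)) := by
        apply Finset.sum_le_sum
        intro i _
        obtain ⟨j₀, hne, hor⟩ := hchoice i
        have hsub : ∑ f ∈ S,
            (if N ≤ k * f i then ∏ j, ((f j : ℝ)) ^ (-(5 / 2) : ℝ) else 0)
            ≤ ∑ f ∈ (Fintype.piFinset (fun _ : Fin k => Finset.range (N + 1))).filter
                (fun f => (∀ j, 0 < f j) ∧ (∑ j, f j = N) ∧ a < f j₀),
              (if N ≤ k * f i then ∏ j, ((f j : ℝ)) ^ (-(5 / 2) : ℝ) else 0) := by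
          apply Finset.sum_le_sum_of_subset_of_nonneg
          · intro f hf
            rw [hS, Finset.mem_filter] at hf
            rw [Finset.mem_filter]
            refine ⟨hf.1, hf.2.1, hf.2.2.1, ?_⟩
            rcases hor with h | h
            · rw [h]; exact hf.2.2.2.1
            · rw [h]; exact hf.2.2.2.2
          · intro f _ _
            split_ifs
            · exact Finset.prod_nonneg fun j _ => Real.rpow_nonneg (Nat.cast_nonneg _) _
            · exact le_refl _
        exact le_trans hsub (per_index k N a hk hN ha i j₀ hne)
    _ = (k : ℝ) * ((k : ℝ) ^ ((5 : ℝ) / 2) * 2 ^ k) * (N : ℝ) ^ (-(5 / 2) : ℝ)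
          * (a : ℝ) ^ (-(3 / 2) : ℝ) := by
        rw [Finset.sum_const, Finset.card_univ, Fintype.card_fin, nsmul_eq_mul]
        ring
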